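/- Let f = (f_1, ..., f_n) : I → ℝ^n be an n-times continuously differentiable function such that its Wronskian W_f is nonvanishing on I. Then the components f_1, ..., f_n form a fundamental system of solutions of the n-th order homogeneous linear differential equation y^{(n)} = Σ_{j=0}^{n−1} Φ_f^{[j]} · y^{(j)} on I; that is, each f_i solves this equation and f_1, ..., f_n are linearly independent. -/

import Mathlib

open Matrix

/-- Noncommutative complete Bell polynomials: `B_0 = I_n`,
`B_{m+1}(X_1,…,X_{m+1}) = ∑_{j=0}^m C(m,j) B_j(X_1,…,X_j) X_{m+1-j}`.
Here `X : Fin m → _` with `X i` playing the role of `X_{i+1}`. -/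
noncomputable def Bell {n : ℕ} :
    (m : ℕ) → (Fin m → Matrix (Fin n) (Fin n) ℝ) → Matrix (Fin n) (Fin n) ℝ
  | 0, _ => 1
  | m + 1, X => ∑ j : Fin (m + 1),
      (Nat.choose m (j : ℕ) : ℝ) •
        (Bell (j : ℕ) (fun i : Fin (j : ℕ) => X (Fin.castLE (by omega) i)) *
          X ⟨m - (j : ℕ), by omega⟩)

/-- Entrywise `k`-th derivative (within `I`) of a matrix-valued function. -/
noncomputable def matD {n : ℕ} (I : Set ℝ) (X : ℝ → Matrix (Fin n) (Fin n) ℝ) (k : ℕ)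
    (x : ℝ) : Matrix (Fin n) (Fin n) ℝ :=
  Matrix.of fun p q => iteratedDerivWithin k (fun t => X t p q) I x

/-- `B_j(X, X', …, X^{(j-1)})` evaluated at `x` (derivatives within `I`). -/
noncomputable def BellD {n : ℕ} (I : Set ℝ) (X : ℝ → Matrix (Fin n) (Fin n) ℝ) (j : ℕ)
    (x : ℝ) : Matrix (Fin n) (Fin n) ℝ :=
  Bell j (fun i : Fin j => matD I X (i : ℕ) x)

/-- Generalized Wronskian `W_f^k = det(f^{(k_1)} | … | f^{(k_n)})` (derivatives within `I`). -/
noncomputable def genW {n : ℕ} (I : Set ℝ) (f : ℝ → Fin n → ℝ) (k : Fin n → ℕ) (x : ℝ) : ℝ :=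
  Matrix.det (Matrix.of fun p q => iteratedDerivWithin (k q) (fun t => f t p) I x)

/-- The multi-index `(n-1, n-2, …, 1, 0)` of the ordinary Wronskian. -/
def wIdx (n : ℕ) : Fin n → ℕ := fun q => n - 1 - (q : ℕ)

/-- The multi-index `(n+d, n-1, …, j+1, j-1, …, 1, 0)`. -/
def dIdx (n d j : ℕ) : Fin n → ℕ :=
  fun q => if (q : ℕ) = 0 then n + d
    else if j < n - (q : ℕ) then n - (q : ℕ) else n - (q : ℕ) - 1

/-- `Φ_f^{[j]} = (-1)^{n-j-1} W_f^{(n,n-1,…,j+1,j-1,…,0)} / W_f`. -/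
noncomputable def Phi {n : ℕ} (I : Set ℝ) (f : ℝ → Fin n → ℝ) (j : ℕ) (x : ℝ) : ℝ :=
  (-1 : ℝ) ^ (n - j - 1) * genW I f (dIdx n 0 j) x / genW I f (wIdx n) x

/-- The `1`-indexed standard basis vector `e_i` of `ℝ^n`. -/
def stdB (n i : ℕ) : Fin n → ℝ := fun p => if (p : ℕ) + 1 = i then 1 else 0

/-- The matrix `X_a = (a | e_1 | … | e_{n-1})`. -/
def colMat {n : ℕ} (a : ℝ → Fin n → ℝ) (x : ℝ) : Matrix (Fin n) (Fin n) ℝ :=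
  Matrix.of fun p q =>
    if (q : ℕ) = 0 then a x p else if (p : ℕ) + 1 = (q : ℕ) then 1 else 0

/-- The matrix `Y_f = (f^{(n-1)} | … | f' | f)` (derivatives within `I`). -/
noncomputable def Yfun {n : ℕ} (I : Set ℝ) (f : ℝ → Fin n → ℝ) (x : ℝ) :
    Matrix (Fin n) (Fin n) ℝ :=
  Matrix.of fun p q => iteratedDerivWithin (n - 1 - (q : ℕ)) (fun t => f t p) I x

/-- The `1`-indexed component `a_i` of `a : I → ℝ^n`, with `a_i := 0` for `i > n`. -/
noncomputable def aExt {n : ℕ} (a : ℝ → Fin n → ℝ) (i : ℕ) : ℝ → ℝ :=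
  fun t => if h : i - 1 < n then a t ⟨i - 1, h⟩ else 0

/-- `y` is an `n`-times differentiable (on `I`) solution of
`y^{(n)} = a_1 y^{(n-1)} + ⋯ + a_n y`, where `a i` is `a_{i+1}`. -/
def SolvesDE {n : ℕ} (I : Set ℝ) (a : ℝ → Fin n → ℝ) (y : ℝ → ℝ) : Prop :=
  (∀ k < n, DifferentiableOn ℝ (iteratedDerivWithin k y I) I) ∧
    ∀ x ∈ I, iteratedDerivWithin n y I x =
      ∑ i : Fin n, a x i * iteratedDerivWithin (n - 1 - (i : ℕ)) y I x

/-- `f : I → ℝ^n` is a fundamental system of solutions of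
`y^{(n)} = a_1 y^{(n-1)} + ⋯ + a_n y`: each component solves the equation and the
components are linearly independent functions on `I`. -/
def FundSystem {n : ℕ} (I : Set ℝ) (a : ℝ → Fin n → ℝ) (f : ℝ → Fin n → ℝ) : Prop :=
  (∀ p : Fin n, SolvesDE I a fun t => f t p) ∧
    LinearIndependent ℝ fun p : Fin n => I.restrict fun t => f t p

/-- if `f : I → ℝ^n` is `n`-times continuously differentiable with
nonvanishing Wronskian, then its components form a fundamental system of solutions of
`y^{(n)} = ∑_{j=0}^{n-1} Φ_f^{[j]} y^{(j)}` on `I` (coefficient of `y^{(n-1-i)}` is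
`Φ_f^{[n-1-i]}`). -/

lemma iterDW_sum {k : ℕ} {I : Set ℝ} (hI : UniqueDiffOn ℝ I) {x : ℝ} (hx : x ∈ I)
    {ι : Type*} (s : Finset ι) (F : ι → ℝ → ℝ)
    (hF : ∀ i ∈ s, ContDiffOn ℝ (k : ℕ∞) (F i) I) :
    iteratedDerivWithin k (fun t => ∑ i ∈ s, F i t) I x
      = ∑ i ∈ s, iteratedDerivWithin k (F i) I x := by
  induction s using Finset.cons_induction with
  | empty =>
      simp only [Finset.sum_empty]
      simp [iteratedDerivWithin, iteratedFDerivWithin_zero_fun]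
  | cons a s ha ih =>
      simp only [Finset.sum_cons]
      have hsum : ContDiffOn ℝ (k : ℕ∞) (fun t => ∑ i ∈ s, F i t) I :=
        ContDiffOn.sum fun i hi => hF i (Finset.mem_cons_of_mem hi)
      have : iteratedDerivWithin k (F a + fun t => ∑ i ∈ s, F i t) I x
          = iteratedDerivWithin k (F a) I x
            + iteratedDerivWithin k (fun t => ∑ i ∈ s, F i t) I x :=
        iteratedDerivWithin_add hx hI ((hF a (Finset.mem_cons_self a s)).contDiffWithinAt hx) (hsum.contDiffWithinAt hx)
      rw [show (fun t => F a t + ∑ i ∈ s, F i t) = (F a + fun t => ∑ i ∈ s, F i t) from rfl,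
        this, ih fun i hi => hF i (Finset.mem_cons_of_mem hi)]

theorem stmt_11 (n : ℕ) (hn : 0 < n) (I : Set ℝ) (hIo : IsOpen I) (hIne : I.Nonempty)
    (hIc : I.OrdConnected) (f : ℝ → Fin n → ℝ)
    (hf : ∀ p : Fin n, ContDiffOn ℝ ((n : ℕ) : ℕ∞) (fun t => f t p) I)
    (hW : ∀ x ∈ I, genW I f (wIdx n) x ≠ 0) :
    FundSystem I (fun x i => Phi I f (n - 1 - (i : ℕ)) x) f := by
  classical
  have hIu : UniqueDiffOn ℝ I := hIo.uniqueDiffOn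
  constructor
  · intro p
    refine ⟨fun k hk => (hf p).differentiableOn_iteratedDerivWithin (by exact_mod_cast hk) hIu,
      ?_⟩
    intro x hx
    have hWx := hW x hx
    set g : Fin (n + 1) → Fin n :=
      fun r => if h : (r : ℕ) = 0 then p else ⟨(r : ℕ) - 1, by omega⟩ with hg
    set M : Matrix (Fin (n + 1)) (Fin (n + 1)) ℝ :=
      Matrix.of fun r c => iteratedDerivWithin (n - (c : ℕ)) (fun t => f t (g r)) I x with hM
    have hg0 : g 0 = p := by simp [hg]
    have hgs : ∀ a : Fin n, g a.succ = a := by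
      intro a
      simp only [hg, Fin.val_succ]
      rw [dif_neg (Nat.succ_ne_zero _)]
      ext
      simp
    have hdet : M.det = 0 := by
      apply Matrix.det_zero_of_row_eq (i := (0 : Fin (n+1))) (j := p.succ)
        (Fin.succ_ne_zero p).symm
      funext c
      simp only [hM, Matrix.of_apply, hg0, hgs]
    rw [Matrix.det_succ_row_zero, Fin.sum_univ_succ] at hdet
    have hM00 : M 0 0 = iteratedDerivWithin n (fun t => f t p) I x := by
      simp [hM, hg0]
    have hM0s : ∀ i : Fin n, M 0 i.succ
        = iteratedDerivWithin (n - 1 - (i : ℕ)) (fun t => f t p) I x := by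
      intro i
      show iteratedDerivWithin (n - ((i.succ : Fin (n+1)) : ℕ)) (fun t => f t (g 0)) I x = _
      rw [hg0, show n - ((i.succ : Fin (n+1)) : ℕ) = n - 1 - (i : ℕ) by
        simp only [Fin.val_succ]; omega]
    have hminor0 : (M.submatrix Fin.succ (Fin.succAbove 0)).det = genW I f (wIdx n) x := by
      unfold genW
      congr 1
      funext a b
      show M (Fin.succ a) ((0 : Fin (n+1)).succAbove b) = _
      rw [Fin.succAbove_zero]
      show iteratedDerivWithin (n - ((Fin.succ b : Fin (n+1)) : ℕ)) (fun t => f t (g a.succ)) I x = _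
      rw [hgs a, show n - ((Fin.succ b : Fin (n+1)) : ℕ) = wIdx n b by
        simp only [Fin.val_succ, wIdx]; omega]
      rfl
    have hminor : ∀ i : Fin n, (M.submatrix Fin.succ (Fin.succAbove i.succ)).det
        = genW I f (dIdx n 0 (n - 1 - (i : ℕ))) x := by
      intro i
      unfold genW
      congr 1
      funext a b
      have hval : ((Fin.succAbove i.succ b : Fin (n+1)) : ℕ)
          = if (b : ℕ) < (i : ℕ) + 1 then (b : ℕ) else (b : ℕ) + 1 := by
        rcases lt_or_ge (b : ℕ) ((i : ℕ) + 1) with h | h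
        · rw [Fin.succAbove_of_castSucc_lt _ _ (by simpa [Fin.lt_def] using h)]
          simp [h]
        · rw [Fin.succAbove_of_le_castSucc _ _ (by simpa [Fin.le_def] using h)]
          simp [Fin.val_succ, Nat.not_lt.mpr h]
      have h2 : n - ((Fin.succAbove i.succ b : Fin (n+1)) : ℕ)
          = dIdx n 0 (n - 1 - (i : ℕ)) b := by
        rw [hval]
        unfold dIdx
        have hb := b.isLt
        have hi := i.isLt
        split_ifs <;> omega
      show M (Fin.succ a) (i.succ.succAbove b) = _
      show iteratedDerivWithin (n - ((i.succ.succAbove b : Fin (n+1)) : ℕ))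
        (fun t => f t (g a.succ)) I x = _
      rw [hgs a, h2]
      rfl
    simp only [hM00, hM0s, hminor0, hminor, Fin.val_succ, Fin.val_zero, pow_zero,
      one_mul] at hdet
    have hexp : ∀ i : Fin n, n - (n - 1 - (i : ℕ)) - 1 = (i : ℕ) := by
      intro i; have := i.isLt; omega
    unfold Phi
    have hstep : ∑ i : Fin n, (-1 : ℝ) ^ (n - (n - 1 - (i : ℕ)) - 1)
          * genW I f (dIdx n 0 (n - 1 - (i : ℕ))) x / genW I f (wIdx n) x
          * iteratedDerivWithin (n - 1 - (i : ℕ)) (fun t => f t p) I x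
        = -(∑ i : Fin n, (-1 : ℝ) ^ ((i : ℕ) + 1)
            * iteratedDerivWithin (n - 1 - (i : ℕ)) (fun t => f t p) I x
            * genW I f (dIdx n 0 (n - 1 - (i : ℕ))) x) / genW I f (wIdx n) x := by
      rw [← Finset.sum_neg_distrib, Finset.sum_div]
      refine Finset.sum_congr rfl fun i _ => ?_
      rw [hexp i, pow_succ]
      field_simp
    rw [hstep]
    have hS : -(∑ i : Fin n, (-1 : ℝ) ^ ((i : ℕ) + 1)
          * iteratedDerivWithin (n - 1 - (i : ℕ)) (fun t => f t p) I x
          * genW I f (dIdx n 0 (n - 1 - (i : ℕ))) x)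
        = iteratedDerivWithin n (fun t => f t p) I x * genW I f (wIdx n) x := by
      linarith [hdet]
    rw [hS, mul_div_assoc, div_self hWx, mul_one]
  · rw [Fintype.linearIndependent_iff]
    intro c hc
    obtain ⟨x, hx⟩ := hIne
    have hzero : Set.EqOn (fun t => ∑ q : Fin n, c q * f t q) 0 I := by
      intro t ht
      have := congrFun hc ⟨t, ht⟩
      simp at this
      exact this
    have hder : ∀ k : ℕ, k ≤ n →
        ∑ q : Fin n, c q * iteratedDerivWithin k (fun t => f t q) I x = 0 := by
      intro k hk
      have hcd : ∀ q : Fin n, ContDiffOn ℝ (k : ℕ∞) (fun t => f t q) I :=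
        fun q => (hf q).of_le (by exact_mod_cast hk)
      have h1 : iteratedDerivWithin k (fun t => ∑ q : Fin n, c q * f t q) I x = 0 := by
        rw [iteratedDerivWithin_congr hzero hx]
        show (iteratedFDerivWithin ℝ k (fun _ : ℝ => (0:ℝ)) I x) (fun _ => 1) = 0
        rw [iteratedFDerivWithin_zero_fun]
        rfl
      calc ∑ q : Fin n, c q * iteratedDerivWithin k (fun t => f t q) I x
          = ∑ q : Fin n, iteratedDerivWithin k (fun t => c q * f t q) I x := by
            refine Finset.sum_congr rfl fun q _ => ?_
            rw [iteratedDerivWithin_const_mul hx hIu _ ((hcd q).contDiffWithinAt hx)]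
        _ = iteratedDerivWithin k (fun t => ∑ q : Fin n, c q * f t q) I x :=
            (iterDW_sum hIu hx Finset.univ (fun q t => c q * f t q)
              fun q _ => contDiffOn_const.mul (hcd q)).symm
        _ = 0 := h1
    set A : Matrix (Fin n) (Fin n) ℝ :=
      Matrix.of fun q' q => iteratedDerivWithin (wIdx n q') (fun t => f t q) I x with hA
    have hAdet : A.det ≠ 0 := by
      have hAT : A = (Matrix.of fun p q =>
          iteratedDerivWithin (wIdx n q) (fun t => f t p) I x)ᵀ := rfl
      rw [hAT, Matrix.det_transpose]
      exact hW x hx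
    have hmv : A.mulVec c = 0 := by
      funext q'
      simp only [Matrix.mulVec, dotProduct, hA, Matrix.of_apply, Pi.zero_apply]
      rw [← hder (wIdx n q') (by unfold wIdx; omega)]
      exact Finset.sum_congr rfl fun q _ => mul_comm _ _
    have hinj : Function.Injective A.mulVec := by
      rw [Matrix.mulVec_injective_iff_isUnit, Matrix.isUnit_iff_isUnit_det]
      exact isUnit_iff_ne_zero.mpr hAdet
    have hc0 : c = 0 := hinj (by rw [hmv, Matrix.mulVec_zero])
    exact fun i => congrFun hc0 i
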